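/- arXiv:0903.1945 — 5 statements merged into one kernel-verified Lean document; each statement's English description precedes it below -/
import Mathlib

section
/- For positive definite s×s real matrices R and T, the block matrix [[R∘T, Diag(R)],[Diag(R), R∘T⁻¹]] is positive semidefinite, where Diag(R) is the diagonal matrix with the diagonal entries of R. -/
open Matrix
open scoped Matrix

/-- Schur product theorem over ℝ: Hadamard product of PSD matrices is PSD. -/
lemma hadamard_posSemidef_aux {m : Type*} [Fintype m] [DecidableEq m]
    {A B : Matrix m m ℝ} (hA : A.PosSemidef) (hB : B.PosSemidef) :
    (A ⊙ B).PosSemidef := by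
  obtain ⟨C, rfl⟩ : ∃ C : Matrix m m ℝ, A = Cᴴ * C := by
    open scoped MatrixOrder in exact CStarAlgebra.nonneg_iff_eq_star_mul_self.mp hA.nonneg
  refine Matrix.PosSemidef.of_dotProduct_mulVec_nonneg ?_ ?_
  · ext i j
    simp only [conjTranspose_apply, hadamard_apply, star_mul', Matrix.mul_apply]
    have h1 := congrFun (congrFun hB.1 i) j
    simp only [conjTranspose_apply] at h1
    simp only [star_trivial] at h1 ⊢
    rw [h1]
    congr 1
    exact Finset.sum_congr rfl fun k _ => by ring
  · intro x
    have lhs : star x ⬝ᵥ (((Cᴴ * C) ⊙ B) *ᵥ x) =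
        ∑ i, ∑ j, ∑ k, C k i * C k j * B i j * x i * x j := by
      simp only [dotProduct, mulVec, hadamard_apply, Matrix.mul_apply,
        conjTranspose_apply, star_trivial, Finset.sum_mul, Finset.mul_sum]
      refine Finset.sum_congr rfl fun i _ => Finset.sum_congr rfl fun j _ =>
        Finset.sum_congr rfl fun k _ => by ring
    have rhs : ∑ k, ((fun i => C k i * x i) ⬝ᵥ (B *ᵥ fun i => C k i * x i)) =
        ∑ i, ∑ j, ∑ k, C k i * C k j * B i j * x i * x j := by
      simp only [dotProduct, mulVec, Finset.sum_mul, Finset.mul_sum]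
      rw [Finset.sum_comm]
      refine Finset.sum_congr rfl fun i _ => ?_
      rw [Finset.sum_comm]
      refine Finset.sum_congr rfl fun j _ => Finset.sum_congr rfl fun k _ => by ring
    rw [lhs, ← rhs]
    exact Finset.sum_nonneg fun k _ => by simpa using hB.dotProduct_mulVec_nonneg (fun i => C k i * x i)

lemma fromBlocks_TinvT_posSemidef {m : Type*} [Fintype m] [DecidableEq m]
    {T : Matrix m m ℝ} (hT : T.PosDef) :
    (Matrix.fromBlocks T 1 1 T⁻¹).PosSemidef := by
  haveI := hT.isUnit.invertible
  have h1 : (1 : Matrix m m ℝ)ᴴ = 1 := by simp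
  rw [show (Matrix.fromBlocks T 1 1 T⁻¹) = Matrix.fromBlocks T 1 (1 : Matrix m m ℝ)ᴴ T⁻¹ by
    rw [h1]]
  rw [Matrix.PosDef.fromBlocks₁₁ _ _ hT]
  simp only [h1, Matrix.one_mul, Matrix.mul_one, sub_self]
  exact Matrix.PosSemidef.zero

lemma fromBlocks_RRRR_posSemidef {m : Type*} [Fintype m] [DecidableEq m]
    {R : Matrix m m ℝ} (hR : R.PosSemidef) :
    (Matrix.fromBlocks R R R R).PosSemidef := by
  obtain ⟨C, rfl⟩ : ∃ C : Matrix m m ℝ, R = Cᴴ * C := by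
    open scoped MatrixOrder in exact CStarAlgebra.nonneg_iff_eq_star_mul_self.mp hR.nonneg
  have key : Matrix.fromBlocks (Cᴴ * C) (Cᴴ * C) (Cᴴ * C) (Cᴴ * C) =
      (Matrix.fromBlocks C C 0 0)ᴴ * (Matrix.fromBlocks C C 0 0) := by
    rw [Matrix.fromBlocks_conjTranspose, Matrix.fromBlocks_multiply]
    simp
  rw [key]
  exact Matrix.posSemidef_conjTranspose_mul_self _

/-- For positive definite `s×s` real matrices `R` and `T`, the block matrix
`[[R∘T, Diag(R)], [Diag(R), R∘T⁻¹]]` is positive semidefinite, where `Diag(R)` is the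
diagonal matrix with the diagonal entries of `R`. -/
theorem block_hadamard_posSemidef {s : ℕ} (R T : Matrix (Fin s) (Fin s) ℝ)
    (hR : R.PosDef) (hT : T.PosDef) :
    (Matrix.fromBlocks (R ⊙ T) (Matrix.diagonal R.diag)
      (Matrix.diagonal R.diag) (R ⊙ T⁻¹)).PosSemidef := by
  have key : Matrix.fromBlocks (R ⊙ T) (Matrix.diagonal R.diag)
      (Matrix.diagonal R.diag) (R ⊙ T⁻¹) =
      (Matrix.fromBlocks R R R R) ⊙ (Matrix.fromBlocks T 1 1 T⁻¹) := by
    ext (i | i) (j | j) <;>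
      simp [Matrix.hadamard_apply, Matrix.diagonal, Matrix.one_apply, Matrix.diag] <;>
      split <;> simp_all
  rw [key]
  exact hadamard_posSemidef_aux (fromBlocks_RRRR_posSemidef hR.posSemidef)
    (fromBlocks_TinvT_posSemidef hT)
end

section
/- For positive definite s×s real matrices R and T, one has R ∘ T⁻¹ ⪰ Diag(R) (R ∘ T)⁻¹ Diag(R), in the Loewner order. -/
open Matrix
open scoped Matrix

section Aux

variable {n : Type*} [Fintype n] [DecidableEq n]

set_option linter.unusedSectionVars false

lemma hadamard_quadform_eq (A C : Matrix n n ℝ) (x : n → ℝ) :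
    x ⬝ᵥ (A ⊙ (Cᴴ * C)) *ᵥ x
      = ∑ k, (fun i => x i * C k i) ⬝ᵥ A *ᵥ (fun i => x i * C k i) := by
  have h1 : x ⬝ᵥ (A ⊙ (Cᴴ * C)) *ᵥ x
      = ∑ i, ∑ k, ∑ j, x i * C k i * (A i j * (x j * C k j)) := by
    simp only [dotProduct, mulVec, hadamard_apply, Matrix.mul_apply, conjTranspose_apply,
      star_trivial, Finset.mul_sum, Finset.sum_mul]
    refine Finset.sum_congr rfl fun i _ => ?_
    rw [Finset.sum_comm]
    exact Finset.sum_congr rfl fun k _ => Finset.sum_congr rfl fun j _ => by ring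
  rw [h1, Finset.sum_comm]
  refine Finset.sum_congr rfl fun k _ => ?_
  simp only [dotProduct, mulVec, Finset.mul_sum]

lemma hadamard_isHermitian {A B : Matrix n n ℝ} (hA : A.IsHermitian) (hB : B.IsHermitian) :
    (A ⊙ B).IsHermitian := by
  have hA' : ∀ i j, A i j = A j i := fun i j => ((hA.apply i j).symm.trans (star_trivial _))
  have hB' : ∀ i j, B i j = B j i := fun i j => ((hB.apply i j).symm.trans (star_trivial _))
  ext i j
  simp only [conjTranspose_apply, hadamard_apply, star_trivial]
  rw [hA' j i, hB' j i]

/-- Schur product theorem (PSD version) over ℝ. -/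
lemma posSemidef_hadamard {A B : Matrix n n ℝ} (hA : A.PosSemidef) (hB : B.PosSemidef) :
    (A ⊙ B).PosSemidef := by
  obtain ⟨C, rfl⟩ := (by open scoped MatrixOrder in exact CStarAlgebra.nonneg_iff_eq_star_mul_self.mp hB.nonneg : ∃ C : Matrix n n ℝ, B = Cᴴ * C)
  refine posSemidef_iff_dotProduct_mulVec.mpr ⟨hadamard_isHermitian hA.1 (isHermitian_conjTranspose_mul_self C), fun x => ?_⟩
  simp only [star_trivial]
  rw [hadamard_quadform_eq]
  exact Finset.sum_nonneg fun k _ => by simpa using hA.dotProduct_mulVec_nonneg (fun i => x i * C k i)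

/-- Schur product theorem (PD version) over ℝ. -/
lemma posDef_hadamard {A B : Matrix n n ℝ} (hA : A.PosDef) (hB : B.PosDef) :
    (A ⊙ B).PosDef := by
  obtain ⟨C, hC⟩ := (by open scoped MatrixOrder in exact CStarAlgebra.nonneg_iff_eq_star_mul_self.mp hB.posSemidef.nonneg : ∃ C : Matrix n n ℝ, B = Cᴴ * C)
  subst hC
  refine posDef_iff_dotProduct_mulVec.mpr ⟨hadamard_isHermitian hA.1 (isHermitian_conjTranspose_mul_self C), fun x hx => ?_⟩
  simp only [star_trivial]
  rw [hadamard_quadform_eq]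
  obtain ⟨i, hi⟩ := Function.ne_iff.mp hx
  simp only [Pi.zero_apply] at hi
  have hcol : ∃ k, C k i ≠ 0 := by
    by_contra h
    push_neg at h
    have hCe : C *ᵥ Pi.single i 1 = 0 := by
      ext k
      simp [mulVec_single, h]
    have hpos := hB.dotProduct_mulVec_pos (x := Pi.single i 1) (by
      intro hc
      have h1 := congrFun hc i
      rw [Pi.single_eq_same] at h1
      exact one_ne_zero h1)
    rw [← mulVec_mulVec, hCe, mulVec_zero, dotProduct_zero] at hpos
    exact lt_irrefl 0 hpos
  obtain ⟨k, hk⟩ := hcol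
  refine Finset.sum_pos' (fun j _ => by simpa using hA.posSemidef.dotProduct_mulVec_nonneg (fun i => x i * C j i))
    ⟨k, Finset.mem_univ k, ?_⟩
  have hy : (fun j => x j * C k j) ≠ 0 :=
    fun h => (mul_ne_zero hi hk) (congrFun h i)
  simpa using hA.dotProduct_mulVec_pos hy

lemma hadamard_fromBlocks {m : Type*} [Fintype m] [DecidableEq m]
    (A A' : Matrix n n ℝ) (B B' : Matrix n m ℝ) (C C' : Matrix m n ℝ) (D D' : Matrix m m ℝ) :
    (fromBlocks A B C D) ⊙ (fromBlocks A' B' C' D')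
      = fromBlocks (A ⊙ A') (B ⊙ B') (C ⊙ C') (D ⊙ D') := by
  ext i j
  cases i <;> cases j <;> rfl

lemma fromBlocks_self_posSemidef {R : Matrix n n ℝ} (hR : R.PosSemidef) :
    (fromBlocks R R R R).PosSemidef := by
  have h := hR.conjTranspose_mul_mul_same (fromCols (1 : Matrix n n ℝ) (1 : Matrix n n ℝ))
  have he : (fromCols (1 : Matrix n n ℝ) 1)ᴴ * R * fromCols (1 : Matrix n n ℝ) 1
      = fromBlocks R R R R := by
    rw [conjTranspose_fromCols_eq_fromRows_conjTranspose, conjTranspose_one,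
      fromRows_mul, fromRows_mul, Matrix.one_mul, mul_fromCols, Matrix.mul_one,
      fromRows_fromCols_eq_fromBlocks]
  rwa [he] at h

end Aux

/-- For positive definite `s×s` real matrices `R` and `T`, one has
`R ∘ T⁻¹ ⪰ Diag(R) (R ∘ T)⁻¹ Diag(R)` in the Loewner order. -/
theorem hadamard_inv_loewner_bound {s : ℕ} (R T : Matrix (Fin s) (Fin s) ℝ)
    (hR : R.PosDef) (hT : T.PosDef) :
    (R ⊙ T⁻¹ - Matrix.diagonal R.diag * (R ⊙ T)⁻¹ * Matrix.diagonal R.diag).PosSemidef := by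
  have hRT : (R ⊙ T).PosDef := posDef_hadamard hR hT
  haveI : Invertible T := hT.isUnit.invertible
  haveI : Invertible (R ⊙ T) := hRT.isUnit.invertible
  have hN1 : (fromBlocks T⁻¹ (1 : Matrix (Fin s) (Fin s) ℝ) 1 T).PosSemidef := by
    have h := (PosDef.fromBlocks₂₂ T⁻¹ (1 : Matrix (Fin s) (Fin s) ℝ) hT).mpr
    rw [conjTranspose_one] at h
    apply h
    simpa [Matrix.one_mul, Matrix.mul_one] using Matrix.PosSemidef.zero
  have hN2 : (fromBlocks R R R R).PosSemidef := fromBlocks_self_posSemidef hR.posSemidef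
  have hM : (fromBlocks (T⁻¹ ⊙ R) ((1 : Matrix (Fin s) (Fin s) ℝ) ⊙ R) (1 ⊙ R)
      (T ⊙ R)).PosSemidef := by
    rw [← hadamard_fromBlocks]
    exact posSemidef_hadamard hN1 hN2
  have h1R : (1 : Matrix (Fin s) (Fin s) ℝ) ⊙ R = diagonal R.diag := one_hadamard R
  rw [h1R, hadamard_comm T R] at hM
  have key := (PosDef.fromBlocks₂₂ (T⁻¹ ⊙ R) (diagonal R.diag) hRT).mp
  have hdiag : (diagonal R.diag)ᴴ = diagonal R.diag := by
    simp [diagonal_conjTranspose]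
  rw [hdiag] at key
  have hfin := key hM
  rwa [hadamard_comm T⁻¹ R] at hfin
end

section
/- For a positive definite s×s real matrix R, one has diag(R)ᵀ (R∘R)⁻¹ diag(R) ≤ s, where diag(R) ∈ ℝˢ is the vector of diagonal entries of R. -/
open Matrix Finset
open scoped Matrix

private lemma swap4 {s : ℕ} (f : Fin s → Fin s → Fin s → Fin s → ℝ) :
    ∑ i, ∑ j, ∑ k, ∑ l, f i j k l = ∑ k, ∑ l, ∑ i, ∑ j, f i j k l := by
  calc ∑ i, ∑ j, ∑ k, ∑ l, f i j k l
      = ∑ i, ∑ k, ∑ j, ∑ l, f i j k l :=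
        Finset.sum_congr rfl fun i _ => Finset.sum_comm
    _ = ∑ k, ∑ i, ∑ j, ∑ l, f i j k l := Finset.sum_comm
    _ = ∑ k, ∑ i, ∑ l, ∑ j, f i j k l :=
        Finset.sum_congr rfl fun k _ => Finset.sum_congr rfl fun i _ => Finset.sum_comm
    _ = ∑ k, ∑ l, ∑ i, ∑ j, f i j k l :=
        Finset.sum_congr rfl fun k _ => Finset.sum_comm

private lemma sum_sq_ineq {s : ℕ} (c : Fin s → Fin s → ℝ) :
    (∑ k, c k k) ^ 2 ≤ (s : ℝ) * ∑ k, ∑ l, (c k l) ^ 2 := by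
  calc (∑ k, c k k) ^ 2 ≤ (#(Finset.univ : Finset (Fin s)) : ℝ) * ∑ k, (c k k) ^ 2 :=
        sq_sum_le_card_mul_sum_sq
    _ ≤ (s : ℝ) * ∑ k, ∑ l, (c k l) ^ 2 := by
        rw [Finset.card_univ, Fintype.card_fin]
        refine mul_le_mul_of_nonneg_left ?_ (Nat.cast_nonneg s)
        refine Finset.sum_le_sum fun k _ => ?_
        exact Finset.single_le_sum (f := fun l => (c k l) ^ 2)
          (fun l _ => sq_nonneg _) (Finset.mem_univ k)

set_option maxHeartbeats 2000000 in
private lemma key {s : ℕ} (R : Matrix (Fin s) (Fin s) ℝ) (hR : R.PosDef) (x : Fin s → ℝ) :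
    (R.diag ⬝ᵥ x) ^ 2 ≤ (s : ℝ) * (x ⬝ᵥ (R ⊙ R).mulVec x) := by
  obtain ⟨B, hBsd, hBB⟩ : ∃ B : Matrix (Fin s) (Fin s) ℝ, B.PosSemidef ∧ B * B = R :=
    open scoped MatrixOrder in
    ⟨CFC.sqrt R, (CFC.sqrt_nonneg R).posSemidef, CFC.sqrt_mul_sqrt_self R hR.posSemidef.nonneg⟩
  have hsym : ∀ i j, B j i = B i j := fun i j => hBsd.isHermitian.apply i j
  have hRent : ∀ i j, R i j = ∑ k, B i k * B j k := by
    intro i j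
    rw [← hBB, Matrix.mul_apply]
    exact Finset.sum_congr rfl fun k _ => by rw [hsym k j]
  have h1 : R.diag ⬝ᵥ x = ∑ k, (∑ i, x i * B i k * B i k) := by
    calc R.diag ⬝ᵥ x = ∑ i, ∑ k, x i * B i k * B i k := by
          refine Finset.sum_congr rfl fun i _ => ?_
          rw [Matrix.diag_apply, hRent i i, Finset.sum_mul]
          exact Finset.sum_congr rfl fun k _ => by ring
      _ = ∑ k, ∑ i, x i * B i k * B i k := Finset.sum_comm
  have h2 : x ⬝ᵥ (R ⊙ R).mulVec x = ∑ k, ∑ l, (∑ i, x i * B i k * B i l) ^ 2 := by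
    have e1 : x ⬝ᵥ (R ⊙ R).mulVec x
        = ∑ i, ∑ j, ∑ k, ∑ l, (x i * B i k * B i l) * (x j * B j k * B j l) := by
      refine Finset.sum_congr rfl fun i _ => ?_
      rw [Matrix.mulVec, dotProduct, Finset.mul_sum]
      refine Finset.sum_congr rfl fun j _ => ?_
      rw [Matrix.hadamard_apply, hRent i j, Finset.sum_mul_sum, Finset.sum_mul,
        Finset.mul_sum]
      refine Finset.sum_congr rfl fun k _ => ?_
      rw [Finset.sum_mul, Finset.mul_sum]
      exact Finset.sum_congr rfl fun l _ => by ring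
    rw [e1, swap4]
    refine Finset.sum_congr rfl fun k _ => Finset.sum_congr rfl fun l _ => ?_
    rw [sq, Finset.sum_mul_sum]
  rw [h1, h2]
  exact sum_sq_ineq (fun k l => ∑ i, x i * B i k * B i l)

/-- For a positive definite `s×s` real matrix `R`, one has
`diag(R)ᵀ (R∘R)⁻¹ diag(R) ≤ s`, where `diag(R)` is the vector of diagonal entries. -/
theorem diag_quadform_le {s : ℕ} (R : Matrix (Fin s) (Fin s) ℝ) (hR : R.PosDef) :
    R.diag ⬝ᵥ ((R ⊙ R)⁻¹).mulVec R.diag ≤ (s : ℝ) := by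
  by_cases hu : IsUnit (R ⊙ R).det
  · set y := ((R ⊙ R)⁻¹).mulVec R.diag with hy
    have hAy : (R ⊙ R).mulVec y = R.diag := by
      rw [hy, Matrix.mulVec_mulVec, Matrix.mul_nonsing_inv _ hu, Matrix.one_mulVec]
    have hkey := key R hR y
    have ht : y ⬝ᵥ (R ⊙ R).mulVec y = R.diag ⬝ᵥ y := by
      rw [hAy, dotProduct_comm]
    rw [ht] at hkey
    nlinarith [hkey, Nat.cast_nonneg (α := ℝ) s, sq_nonneg (R.diag ⬝ᵥ y - s)]
  · rw [Matrix.nonsing_inv_apply_not_isUnit _ hu]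
    simp
end

section
/- For a positive semidefinite s×s real matrix R, the entrywise square satisfies R ∘ R ⪰ (1/s) · diag(R) diag(R)ᵀ in the Loewner order. -/
open Matrix
open scoped Matrix

/-- For a positive semidefinite `s×s` real matrix `R`, the entrywise square satisfies
`R ∘ R ⪰ (1/s) · diag(R) diag(R)ᵀ` in the Loewner order. -/
theorem hadamard_sq_ge_diag_rank_one {s : ℕ} (R : Matrix (Fin s) (Fin s) ℝ)
    (hR : R.PosSemidef) :
    (R ⊙ R - ((s : ℝ))⁻¹ • Matrix.vecMulVec R.diag R.diag).PosSemidef := by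
  have hRsym : ∀ i j, R j i = R i j := fun i j => by simpa using hR.1.apply i j
  obtain ⟨B0, hB0sym, hB0⟩ : ∃ B : Matrix (Fin s) (Fin s) ℝ, (∀ i j, B j i = B i j) ∧ B * B = R := by
    open MatrixOrder in
    exact ⟨CFC.sqrt R, fun i j => by simpa using (CFC.sqrt_nonneg R).posSemidef.1.apply i j,
      CFC.sqrt_mul_sqrt_self R hR.nonneg⟩
  have hBsym : ∀ i j, B0 j i = B0 i j := hB0sym
  set B := B0 with hBdef
  have hBB : B * B = R := hB0
  clear_value B
  refine posSemidef_iff_dotProduct_mulVec.mpr ⟨?_, ?_⟩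
  · ext i j
    simp [conjTranspose_apply, hadamard, vecMulVec_apply, Matrix.diag, hRsym i j, mul_comm]
  · intro x
    have hstar : star x = x := by simp
    rw [hstar, sub_mulVec, dotProduct_sub, smul_mulVec, dotProduct_smul]
    set D := Matrix.diagonal x with hD
    set M := B * D * B with hM
    clear_value D M
    have hBD : ∀ i k, (B * D) i k = B i k * x k := fun i k => by
      rw [hD, Matrix.mul_diagonal]
    have hMapp : ∀ i j, M i j = ∑ k, B i k * x k * B k j := fun i j => by
      rw [hM, Matrix.mul_apply]
      exact Finset.sum_congr rfl fun k _ => by rw [hBD]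
    have hMsym : ∀ i j, M j i = M i j := by
      intro i j
      rw [hMapp, hMapp]
      exact Finset.sum_congr rfl fun k _ => by rw [hBsym j k, hBsym k i]; ring
    -- trace identity
    have htr : ∑ i, M i i = ∑ i, x i * R i i := by
      simp only [hMapp]
      rw [Finset.sum_comm]
      refine Finset.sum_congr rfl fun k _ => ?_
      rw [← hBB, Matrix.mul_apply, Finset.mul_sum]
      exact Finset.sum_congr rfl fun i _ => by rw [hBsym i k]; ring
    -- second moment identity
    have htr2 : (M * M).trace = (D * R * (D * R)).trace := by
      have h1 : M * M = B * (D * R * D) * B := by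
        rw [hM, ← hBB]; noncomm_ring
      rw [h1, Matrix.trace_mul_comm, ← Matrix.mul_assoc, hBB, Matrix.trace_mul_comm]
      congr 1
      noncomm_ring
    have hDR : ∀ i j, (D * R) i j = x i * R i j := fun i j => by
      rw [hD, Matrix.diagonal_mul]
    have hQ : ∑ i, ∑ j, (M i j) ^ 2 = ∑ i, ∑ j, x i * x j * (R i j) ^ 2 := by
      have lhs : (M * M).trace = ∑ i, ∑ j, (M i j) ^ 2 := by
        simp only [Matrix.trace, Matrix.diag, Matrix.mul_apply]
        exact Finset.sum_congr rfl fun i _ => Finset.sum_congr rfl fun j _ => by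
          rw [hMsym j i]; ring
      have rhs : (D * R * (D * R)).trace = ∑ i, ∑ j, x i * x j * (R i j) ^ 2 := by
        simp only [Matrix.trace, Matrix.diag, Matrix.mul_apply, hDR]
        exact Finset.sum_congr rfl fun i _ => Finset.sum_congr rfl fun j _ => by
          rw [hRsym j i]; ring
      rw [← lhs, htr2, rhs]
    -- Cauchy–Schwarz on the diagonal of M
    have hCS : (∑ i, x i * R i i) ^ 2 ≤ (s : ℝ) * ∑ i, ∑ j, x i * x j * (R i j) ^ 2 := by
      rw [← htr, ← hQ]
      calc (∑ i, M i i) ^ 2 ≤ (Finset.univ.card : ℝ) * ∑ i, (M i i) ^ 2 := by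
            exact sq_sum_le_card_mul_sum_sq (s := Finset.univ) (f := fun i => M i i)
        _ ≤ (s : ℝ) * ∑ i, ∑ j, (M i j) ^ 2 := by
            rw [Finset.card_univ, Fintype.card_fin]
            refine mul_le_mul_of_nonneg_left (Finset.sum_le_sum fun i _ => ?_) (by positivity)
            exact Finset.single_le_sum (f := fun j => (M i j) ^ 2)
              (fun j _ => sq_nonneg _) (Finset.mem_univ i)
    -- now expand the two quadratic forms
    have e1 : x ⬝ᵥ (R ⊙ R) *ᵥ x = ∑ i, ∑ j, x i * x j * (R i j) ^ 2 := by
      simp only [dotProduct, Matrix.mulVec, dotProduct, Matrix.hadamard_apply,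
        Finset.mul_sum]
      exact Finset.sum_congr rfl fun i _ => Finset.sum_congr rfl fun j _ => by ring
    have e2 : x ⬝ᵥ Matrix.vecMulVec R.diag R.diag *ᵥ x = (∑ i, x i * R i i) ^ 2 := by
      simp only [dotProduct, Matrix.mulVec, dotProduct, Matrix.vecMulVec_apply,
        Matrix.diag, Finset.mul_sum]
      rw [sq, Finset.sum_mul_sum]
      exact Finset.sum_congr rfl fun i _ => Finset.sum_congr rfl fun j _ => by ring
    rw [e1, e2, sub_nonneg]
    have h1 : ((s : ℝ))⁻¹ * (∑ i, x i * R i i) ^ 2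
        ≤ ((s : ℝ))⁻¹ * ((s : ℝ) * ∑ i, ∑ j, x i * x j * (R i j) ^ 2) :=
      mul_le_mul_of_nonneg_left hCS (by positivity)
    have hQnn : 0 ≤ ∑ i, ∑ j, x i * x j * (R i j) ^ 2 := by
      rw [← hQ]
      exact Finset.sum_nonneg fun i _ => Finset.sum_nonneg fun j _ => sq_nonneg _
    calc ((s : ℝ))⁻¹ • (∑ i, x i * R i i) ^ 2
        = ((s : ℝ))⁻¹ * (∑ i, x i * R i i) ^ 2 := by rw [smul_eq_mul]
      _ ≤ ((s : ℝ))⁻¹ * ((s : ℝ) * ∑ i, ∑ j, x i * x j * (R i j) ^ 2) := h1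
      _ ≤ ∑ i, ∑ j, x i * x j * (R i j) ^ 2 := by
          rcases Nat.eq_zero_or_pos s with hs | hs
          · simp only [hs]
            simpa using hQnn
          · rw [← mul_assoc, inv_mul_cancel₀ (by positivity), one_mul]
end

section
/- Let y = Hs + z where z ∼ N(0, Σ_z) in ℝⁿ with Σ_z ≻ 0, independent of s, and s has finite support in ℝᵐ. Then the mutual information I(s; y) is a differentiable function along the scaling snr ↦ √snr·H, and the channel where the two equally likely inputs s⁽¹⁾=(2,0)ᵀ, s⁽²⁾=(0,2)ᵀ are transmitted through H = [[1,β],[β,1]] with diagonal precoder Diag(√λ₁, √λ₂) and Σ_z = I₂ yields squared received-point distances d²(ρ,0,β) = d²(0,ρ,β) = 4ρ(1+β²) and d²(ρ/2,ρ/2,β) = 4ρ(1−β)². In particular, for 0 < β ≤ 1, d²(ρ,0,β) > 4ρ > d²(ρ/2,ρ/2,β). -/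
open MeasureTheory Matrix Real

/-- The density of a centered multivariate Gaussian `N(0, S)` on `ℝⁿ`. -/
noncomputable def gaussPdf {n : ℕ} (S : Matrix (Fin n) (Fin n) ℝ) (y : Fin n → ℝ) : ℝ :=
  ((2 * Real.pi) ^ (n : ℝ) * S.det) ^ (-(1 : ℝ) / 2) *
    Real.exp (-(y ⬝ᵥ S⁻¹.mulVec y) / 2)

/-- The density of `y = G s + z` when `s` has finite support `pts` with weights `w`
and `z ∼ N(0, S)`. -/
noncomputable def mixDensity {n m K : ℕ} (S : Matrix (Fin n) (Fin n) ℝ)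
    (w : Fin K → ℝ) (pts : Fin K → (Fin m → ℝ)) (G : Matrix (Fin n) (Fin m) ℝ)
    (y : Fin n → ℝ) : ℝ :=
  ∑ k, w k * gaussPdf S (y - G.mulVec (pts k))

/-- The mutual information `I(s; y) = h(y) − h(z)` for the channel `y = G s + z`. -/
noncomputable def mutInfo {n m K : ℕ} (S : Matrix (Fin n) (Fin n) ℝ)
    (w : Fin K → ℝ) (pts : Fin K → (Fin m → ℝ)) (G : Matrix (Fin n) (Fin m) ℝ) : ℝ :=
  (-∫ y, mixDensity S w pts G y * Real.log (mixDensity S w pts G y)) -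
    (-∫ y, gaussPdf S y * Real.log (gaussPdf S y))

/-- Squared distance `‖r⁽¹⁾ − r⁽²⁾‖²` between the two noiseless received points of the
counterexample channel `H = [[1,β],[β,1]]` with precoder `Diag(√λ₁, √λ₂)` and inputs
`s⁽¹⁾ = (2,0)ᵀ`, `s⁽²⁾ = (0,2)ᵀ`. -/
noncomputable def d2 (β lam1 lam2 : ℝ) : ℝ :=
  let Hce : Matrix (Fin 2) (Fin 2) ℝ := !![1, β; β, 1]
  let P : Matrix (Fin 2) (Fin 2) ℝ := Matrix.diagonal ![Real.sqrt lam1, Real.sqrt lam2]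
  let r1 := (Hce * P).mulVec ![2, 0]
  let r2 := (Hce * P).mulVec ![0, 2]
  ∑ i, (r1 i - r2 i) ^ 2


lemma quad_continuous {n : ℕ} (M : Matrix (Fin n) (Fin n) ℝ) :
    Continuous (fun v : Fin n → ℝ => v ⬝ᵥ M.mulVec v) := by
  simp only [dotProduct, mulVec]
  exact continuous_finset_sum _ fun i _ => (continuous_apply i).mul
    (continuous_finset_sum _ fun j _ => continuous_const.mul (continuous_apply j))

lemma dot_bound {n : ℕ} (M : Matrix (Fin n) (Fin n) ℝ) (x z : Fin n → ℝ) :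
    |x ⬝ᵥ M.mulVec z| ≤ (∑ i, ∑ j, |M i j|) * ‖x‖ * ‖z‖ := by
  simp only [dotProduct, mulVec]
  calc |∑ i, x i * ∑ j, M i j * z j| ≤ ∑ i, |x i * ∑ j, M i j * z j| :=
        Finset.abs_sum_le_sum_abs _ _
    _ ≤ ∑ i, ∑ j, |M i j| * ‖x‖ * ‖z‖ := by
        refine Finset.sum_le_sum fun i _ => ?_
        rw [abs_mul]
        calc |x i| * |∑ j, M i j * z j| ≤ ‖x‖ * ∑ j, |M i j| * ‖z‖ := by
              refine mul_le_mul (norm_le_pi_norm x i) ?_ (abs_nonneg _) (norm_nonneg _)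
              refine (Finset.abs_sum_le_sum_abs _ _).trans (Finset.sum_le_sum fun j _ => ?_)
              rw [abs_mul]
              exact mul_le_mul_of_nonneg_left (norm_le_pi_norm z j) (abs_nonneg _)
          _ = ∑ j, |M i j| * ‖x‖ * ‖z‖ := by rw [Finset.mul_sum]; exact Finset.sum_congr rfl fun j _ => by ring
    _ = (∑ i, ∑ j, |M i j|) * ‖x‖ * ‖z‖ := by simp [Finset.sum_mul]
      
lemma quad_upper {n : ℕ} (M : Matrix (Fin n) (Fin n) ℝ) (x : Fin n → ℝ) :
    x ⬝ᵥ M.mulVec x ≤ (∑ i, ∑ j, |M i j|) * ‖x‖ ^ 2 := by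
  have := dot_bound M x x
  rw [sq]
  nlinarith [le_abs_self (x ⬝ᵥ M.mulVec x)]

lemma coercive {n : ℕ} {M : Matrix (Fin n) (Fin n) ℝ} (hM : M.PosDef) :
    ∃ lam > (0:ℝ), ∀ v : Fin n → ℝ, lam * ‖v‖ ^ 2 ≤ v ⬝ᵥ M.mulVec v := by
  rcases Nat.eq_zero_or_pos n with hn | hn
  · refine ⟨1, one_pos, fun v => ?_⟩
    subst hn
    have hv : v = 0 := Subsingleton.elim _ _
    subst hv
    rw [norm_zero]
    simp [dotProduct]
  · haveI : Nonempty (Fin n) := ⟨⟨0, hn⟩⟩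
    have hcpt : IsCompact (Metric.sphere (0 : Fin n → ℝ) 1) := isCompact_sphere _ _
    have hne : (Metric.sphere (0 : Fin n → ℝ) 1).Nonempty := by
      exact NormedSpace.sphere_nonempty.2 zero_le_one
    obtain ⟨u, hu, hmin'⟩ := hcpt.exists_isMinOn hne (quad_continuous M).continuousOn
    have hu1 : ‖u‖ = 1 := by simpa using hu
    have hu0 : u ≠ 0 := by intro h; rw [h] at hu1; simp at hu1
    have hlam : 0 < u ⬝ᵥ M.mulVec u := by
      have := hM.dotProduct_mulVec_pos hu0
      simpa using this
    refine ⟨u ⬝ᵥ M.mulVec u, hlam, fun v => ?_⟩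
    rcases eq_or_ne v 0 with hv | hv
    · simp [hv]
    · have hnv : (0:ℝ) < ‖v‖ := norm_pos_iff.2 hv
      set s := ‖v‖⁻¹ • v with hs
      have hsn : ‖s‖ = 1 := by
        rw [hs, norm_smul, norm_inv, norm_norm, inv_mul_cancel₀ hnv.ne']
      have hss : s ∈ Metric.sphere (0 : Fin n → ℝ) 1 := by simpa using hsn
      have h1 : u ⬝ᵥ M.mulVec u ≤ s ⬝ᵥ M.mulVec s := hmin' hss
      have hexp : s ⬝ᵥ M.mulVec s = ‖v‖⁻¹ ^ 2 * (v ⬝ᵥ M.mulVec v) := by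
        rw [hs, Matrix.mulVec_smul, smul_dotProduct, dotProduct_smul]
        simp [smul_smul, sq]; ring
      rw [hexp] at h1
      have h2 : (u ⬝ᵥ M.mulVec u) * ‖v‖ ^ 2 ≤ (‖v‖⁻¹ ^ 2 * (v ⬝ᵥ M.mulVec v)) * ‖v‖ ^ 2 := by
        exact mul_le_mul_of_nonneg_right h1 (by positivity)
      calc (u ⬝ᵥ M.mulVec u) * ‖v‖ ^ 2 ≤ (‖v‖⁻¹ ^ 2 * (v ⬝ᵥ M.mulVec v)) * ‖v‖ ^ 2 := h2
        _ = v ⬝ᵥ M.mulVec v := by field_simp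

lemma integrable_exp_neg_sup_sq {n : ℕ} {δ : ℝ} (hδ : 0 < δ) :
    Integrable (fun y : Fin n → ℝ => Real.exp (-δ * ‖y‖ ^ 2)) := by
  have hprod : Integrable (fun y : Fin n → ℝ => ∏ i, Real.exp (-(δ/n) * (y i) ^ 2)) := by
    apply Integrable.fintype_prod (f := fun _ (v : ℝ) => Real.exp (-(δ/n) * v ^ 2))
    intro i
    have hn : (0:ℝ) < n := by exact_mod_cast i.pos
    exact integrable_exp_neg_mul_sq (div_pos hδ hn)
  refine hprod.mono ?_ (Filter.Eventually.of_forall fun y => ?_)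
  · exact (Real.continuous_exp.comp
      ((continuous_const.mul (continuous_norm.pow 2)))).aestronglyMeasurable
  · rw [Real.norm_eq_abs, Real.norm_eq_abs, abs_of_pos (Real.exp_pos _),
      ← Real.exp_sum, abs_of_pos (Real.exp_pos _)]
    apply Real.exp_le_exp.2
    have hsum : ∑ i, (y i) ^ 2 ≤ n * ‖y‖ ^ 2 := by
      calc ∑ i, (y i) ^ 2 ≤ ∑ _i : Fin n, ‖y‖ ^ 2 := by
            refine Finset.sum_le_sum fun i _ => ?_
            have := norm_le_pi_norm y i
            have h0 : (0:ℝ) ≤ ‖y i‖ := norm_nonneg _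
            calc (y i)^2 = ‖y i‖^2 := by rw [Real.norm_eq_abs, sq_abs]
              _ ≤ ‖y‖^2 := by nlinarith [norm_nonneg y]
        _ = n * ‖y‖ ^ 2 := by simp [Finset.sum_const, nsmul_eq_mul]
    rcases Nat.eq_zero_or_pos n with h0 | h0
    · subst h0; simp; positivity
    · have hn : (0:ℝ) < n := by exact_mod_cast h0
      have : ∑ i, -(δ/n) * (y i)^2 = -(δ/n) * ∑ i, (y i)^2 := by rw [Finset.mul_sum]
      rw [this]
      have h1 : (δ/n) * ∑ i, (y i)^2 ≤ δ * ‖y‖^2 := by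
        calc (δ/n) * ∑ i, (y i)^2 ≤ (δ/n) * (n * ‖y‖^2) :=
              mul_le_mul_of_nonneg_left hsum (by positivity)
          _ = δ * ‖y‖^2 := by field_simp
      linarith

lemma quad_symm {n : ℕ} {M : Matrix (Fin n) (Fin n) ℝ} (hsym : M.IsHermitian)
    (a y : Fin n → ℝ) : a ⬝ᵥ M.mulVec y = y ⬝ᵥ M.mulVec a := by
  have hT : Mᵀ = M := by
    have := hsym
    rwa [Matrix.IsHermitian, Matrix.conjTranspose_eq_transpose_of_trivial] at this
  rw [Matrix.dotProduct_mulVec, ← Matrix.vecMul_transpose, hT, dotProduct_comm]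

lemma quad_expand {n : ℕ} {M : Matrix (Fin n) (Fin n) ℝ} (hsym : M.IsHermitian)
    (y a : Fin n → ℝ) (s : ℝ) :
    (y - s • a) ⬝ᵥ M.mulVec (y - s • a) =
      y ⬝ᵥ M.mulVec y - 2*s*(y ⬝ᵥ M.mulVec a) + s^2 * (a ⬝ᵥ M.mulVec a) := by
  rw [Matrix.mulVec_sub, Matrix.mulVec_smul, sub_dotProduct,
    smul_dotProduct, dotProduct_sub, dotProduct_sub,
    dotProduct_smul, dotProduct_smul, quad_symm hsym a y]
  simp only [smul_eq_mul]
  ring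


section Aux

variable {n m K : ℕ}

noncomputable def gC (n : ℕ) (S : Matrix (Fin n) (Fin n) ℝ) : ℝ :=
  ((2 * Real.pi) ^ (n : ℝ) * S.det) ^ (-(1 : ℝ) / 2)

noncomputable def qF (S : Matrix (Fin n) (Fin n) ℝ) (v : Fin n → ℝ) : ℝ :=
  v ⬝ᵥ S⁻¹.mulVec v

noncomputable def aV (H : Matrix (Fin n) (Fin m) ℝ) (pts : Fin K → (Fin m → ℝ))
    (k : Fin K) : Fin n → ℝ := H.mulVec (pts k)

noncomputable def bF (S : Matrix (Fin n) (Fin n) ℝ) (H : Matrix (Fin n) (Fin m) ℝ)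
    (pts : Fin K → (Fin m → ℝ)) (y : Fin n → ℝ) (k : Fin K) : ℝ :=
  y ⬝ᵥ S⁻¹.mulVec (aV H pts k)

noncomputable def phiF (S : Matrix (Fin n) (Fin n) ℝ) (H : Matrix (Fin n) (Fin m) ℝ)
    (pts : Fin K → (Fin m → ℝ)) (k : Fin K) (t : ℝ) (y : Fin n → ℝ) : ℝ :=
  gC n S * Real.exp ((-(qF S y) + 2 * Real.sqrt t * bF S H pts y k
    - t * qF S (aV H pts k)) / 2)

noncomputable def fF (S : Matrix (Fin n) (Fin n) ℝ) (H : Matrix (Fin n) (Fin m) ℝ)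
    (w : Fin K → ℝ) (pts : Fin K → (Fin m → ℝ)) (t : ℝ) (y : Fin n → ℝ) : ℝ :=
  ∑ k, w k * phiF S H pts k t y

noncomputable def psiF (S : Matrix (Fin n) (Fin n) ℝ) (H : Matrix (Fin n) (Fin m) ℝ)
    (pts : Fin K → (Fin m → ℝ)) (k : Fin K) (t : ℝ) (y : Fin n → ℝ) : ℝ :=
  (bF S H pts y k / Real.sqrt t - qF S (aV H pts k)) / 2

noncomputable def fF' (S : Matrix (Fin n) (Fin n) ℝ) (H : Matrix (Fin n) (Fin m) ℝ)
    (w : Fin K → ℝ) (pts : Fin K → (Fin m → ℝ)) (t : ℝ) (y : Fin n → ℝ) : ℝ :=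
  ∑ k, w k * (phiF S H pts k t y * psiF S H pts k t y)

variable {S : Matrix (Fin n) (Fin n) ℝ} {H : Matrix (Fin n) (Fin m) ℝ}
  {w : Fin K → ℝ} {pts : Fin K → (Fin m → ℝ)}

lemma gC_pos (hS : S.PosDef) : 0 < gC n S := by
  have hdet := hS.det_pos
  exact Real.rpow_pos_of_pos (by positivity) _

lemma phiF_pos (hS : S.PosDef) (k : Fin K) (t : ℝ) (y : Fin n → ℝ) :
    0 < phiF S H pts k t y := mul_pos (gC_pos hS) (Real.exp_pos _)

lemma fF_pos (hS : S.PosDef) (hw : ∀ k, 0 ≤ w k) {k₀ : Fin K} (hk₀ : 0 < w k₀)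
    (t : ℝ) (y : Fin n → ℝ) : 0 < fF S H w pts t y := by
  refine Finset.sum_pos' (fun k _ => mul_nonneg (hw k) (phiF_pos hS k t y).le)
    ⟨k₀, Finset.mem_univ _, mul_pos hk₀ (phiF_pos hS k₀ t y)⟩

lemma phiF_eq (hS : S.PosDef) {t : ℝ} (ht : 0 ≤ t) (k : Fin K) (y : Fin n → ℝ) :
    phiF S H pts k t y
      = gC n S * Real.exp (-(qF S (y - Real.sqrt t • aV H pts k)) / 2) := by
  have hMh : (S⁻¹).IsHermitian := hS.inv.1
  have hexp := quad_expand hMh y (aV H pts k) (Real.sqrt t)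
  have hsq : Real.sqrt t ^ 2 = t := Real.sq_sqrt ht
  unfold phiF qF bF
  congr 1
  unfold qF at hexp
  rw [hexp, hsq]
  ring

lemma mix_eq (hS : S.PosDef) {t : ℝ} (ht : 0 ≤ t) (y : Fin n → ℝ) :
    mixDensity S w pts (Real.sqrt t • H) y = fF S H w pts t y := by
  unfold mixDensity fF
  refine Finset.sum_congr rfl fun k _ => ?_
  rw [phiF_eq hS ht k y]
  congr 1
  unfold gaussPdf gC qF aV
  rw [Matrix.smul_mulVec, neg_div]

end Aux

section Aux2

variable {n m K : ℕ} {S : Matrix (Fin n) (Fin n) ℝ} {H : Matrix (Fin n) (Fin m) ℝ}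
  {w : Fin K → ℝ} {pts : Fin K → (Fin m → ℝ)}

lemma phiF_hasDerivAt {t : ℝ} (ht : 0 < t) (k : Fin K) (y : Fin n → ℝ) :
    HasDerivAt (fun t => phiF S H pts k t y)
      (phiF S H pts k t y * psiF S H pts k t y) t := by
  have hst : Real.sqrt t ≠ 0 := (Real.sqrt_pos.2 ht).ne'
  have h1 : HasDerivAt Real.sqrt (1 / (2 * Real.sqrt t)) t := Real.hasDerivAt_sqrt ht.ne'
  have h2 : HasDerivAt (fun t => 2 * Real.sqrt t * bF S H pts y k)
      (2 * (1 / (2 * Real.sqrt t)) * bF S H pts y k) t :=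
    (h1.const_mul (2:ℝ)).mul_const _
  have h3 : HasDerivAt (fun t : ℝ => t * qF S (aV H pts k)) (1 * qF S (aV H pts k)) t :=
    (hasDerivAt_id t).mul_const _
  have h4 : HasDerivAt (fun t => (-(qF S y) + 2 * Real.sqrt t * bF S H pts y k
      - t * qF S (aV H pts k)) / 2)
      ((0 + 2 * (1 / (2 * Real.sqrt t)) * bF S H pts y k - 1 * qF S (aV H pts k)) / 2) t :=
    (((hasDerivAt_const t (-(qF S y))).add h2).sub h3).div_const 2
  have h5 := (h4.exp).const_mul (gC n S)
  refine h5.congr_deriv ?_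
  unfold phiF psiF
  field_simp
  ring

lemma fF_hasDerivAt {t : ℝ} (ht : 0 < t) (y : Fin n → ℝ) :
    HasDerivAt (fun t => fF S H w pts t y) (fF' S H w pts t y) t := by
  unfold fF fF'
  exact HasDerivAt.fun_sum fun k _ => (phiF_hasDerivAt ht k y).const_mul (w k)

lemma FlogF_hasDerivAt (hS : S.PosDef) (hw : ∀ k, 0 ≤ w k) {k₀ : Fin K} (hk₀ : 0 < w k₀)
    {t : ℝ} (ht : 0 < t) (y : Fin n → ℝ) :
    HasDerivAt (fun t => fF S H w pts t y * Real.log (fF S H w pts t y))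
      (fF' S H w pts t y * (Real.log (fF S H w pts t y) + 1)) t := by
  have hfpos := fF_pos (H := H) (pts := pts) hS hw hk₀ t y
  have hf := fF_hasDerivAt (S := S) (H := H) (w := w) (pts := pts) ht y
  have hlog : HasDerivAt (fun t => Real.log (fF S H w pts t y))
      (fF' S H w pts t y / fF S H w pts t y) t := hf.log hfpos.ne'
  have := hf.mul hlog
  refine this.congr_deriv ?_
  field_simp

-- continuity in y
lemma bF_continuous (k : Fin K) : Continuous (fun y : Fin n → ℝ => bF S H pts y k) := by
  unfold bF dotProduct
  exact continuous_finset_sum _ fun i _ => (continuous_apply i).mul continuous_const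

lemma phiF_continuous (k : Fin K) (t : ℝ) :
    Continuous (fun y => phiF S H pts k t y) := by
  unfold phiF
  refine continuous_const.mul (Real.continuous_exp.comp ?_)
  refine Continuous.div_const ?_ 2
  refine Continuous.sub (Continuous.add ?_ (continuous_const.mul (bF_continuous k))) continuous_const
  exact (quad_continuous (S⁻¹)).neg

lemma fF_continuous (t : ℝ) : Continuous (fun y => fF S H w pts t y) := by
  unfold fF
  exact continuous_finset_sum _ fun k _ => continuous_const.mul ((phiF_continuous k t))

lemma fF'_continuous (t : ℝ) : Continuous (fun y => fF' S H w pts t y) := by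
  unfold fF' psiF
  refine continuous_finset_sum _ fun k _ => continuous_const.mul (Continuous.mul (phiF_continuous k t) ?_)
  exact (((bF_continuous k).div_const _).sub continuous_const).div_const _

lemma FlogF_continuous (hS : S.PosDef) (hw : ∀ k, 0 ≤ w k) {k₀ : Fin K} (hk₀ : 0 < w k₀)
    (t : ℝ) : Continuous (fun y => fF S H w pts t y * Real.log (fF S H w pts t y)) :=
  (fF_continuous t).mul ((fF_continuous t).log fun y => (fF_pos hS hw hk₀ t y).ne')

lemma F'full_continuous (hS : S.PosDef) (hw : ∀ k, 0 ≤ w k) {k₀ : Fin K} (hk₀ : 0 < w k₀)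
    (t : ℝ) :
    Continuous (fun y => fF' S H w pts t y * (Real.log (fF S H w pts t y) + 1)) :=
  (fF'_continuous t).mul
    (((fF_continuous t).log fun y => (fF_pos hS hw hk₀ t y).ne').add continuous_const)

end Aux2

lemma absorb {lam L₀ Kc : ℝ} (hlam : 0 < lam) (hL₀ : 0 ≤ L₀) (hKc : 0 ≤ Kc)
    {x : ℝ} (hx : 0 ≤ x) :
    (1 + x) * (1 + L₀ + Kc * x ^ 2) * Real.exp (-(lam/4) * x ^ 2)
      ≤ (2 + 16/lam) * (1 + L₀ + 16*Kc/lam) * Real.exp (-(lam/8) * x ^ 2) := by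
  set ε : ℝ := lam/16 with hε
  have hεpos : 0 < ε := by positivity
  have h1 : 1 + x ≤ (2 + 1/ε) * (1 + ε * x ^ 2) := by
    have e0 : (1/ε) * (ε * x ^ 2) = x ^ 2 := by field_simp
    nlinarith [sq_nonneg (x - 1), one_div_pos.2 hεpos, mul_nonneg hεpos.le (sq_nonneg x)]
  have h2 : 1 + L₀ + Kc * x ^ 2 ≤ (1 + L₀ + Kc/ε) * (1 + ε * x ^ 2) := by
    have e1 : (Kc/ε) * (ε * x^2) = Kc * x^2 := by field_simp
    nlinarith [div_nonneg hKc hεpos.le,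
      mul_nonneg (mul_nonneg (by linarith : (0:ℝ) ≤ 1 + L₀) hεpos.le) (sq_nonneg x)]
  have hexp : (1 + ε * x ^ 2) ^ 2 ≤ Real.exp ((lam/8) * x ^ 2) := by
    have h := Real.add_one_le_exp (ε * x ^ 2)
    have hnn : (0:ℝ) ≤ 1 + ε * x ^ 2 := by positivity
    calc (1 + ε * x ^ 2) ^ 2 ≤ (Real.exp (ε * x ^ 2)) ^ 2 := by
          exact pow_le_pow_left₀ hnn (by linarith) 2
      _ = Real.exp (ε * x ^ 2 + ε * x ^ 2) := by rw [Real.exp_add]; ring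
      _ = Real.exp ((lam/8) * x ^ 2) := by rw [hε]; ring_nf
  have hA : (0:ℝ) ≤ 1 + L₀ + Kc * x ^ 2 := by positivity
  have hB : (0:ℝ) ≤ (2 + 1/ε) * (1 + ε * x ^ 2) := by positivity
  calc (1 + x) * (1 + L₀ + Kc * x ^ 2) * Real.exp (-(lam/4) * x ^ 2)
      ≤ ((2 + 1/ε) * (1 + ε * x ^ 2)) * ((1 + L₀ + Kc/ε) * (1 + ε * x ^ 2))
          * Real.exp (-(lam/4) * x ^ 2) := by
        refine mul_le_mul_of_nonneg_right ?_ (Real.exp_pos _).le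
        exact mul_le_mul h1 h2 hA hB
    _ = (2 + 1/ε) * (1 + L₀ + Kc/ε) * ((1 + ε * x ^ 2) ^ 2 * Real.exp (-(lam/4) * x ^ 2)) := by
        ring
    _ ≤ (2 + 1/ε) * (1 + L₀ + Kc/ε) * (Real.exp ((lam/8) * x ^ 2) * Real.exp (-(lam/4) * x ^ 2)) := by
        refine mul_le_mul_of_nonneg_left
          (mul_le_mul_of_nonneg_right hexp (Real.exp_pos _).le) ?_
        have : (0:ℝ) ≤ 1 + L₀ + Kc/ε := by positivity
        positivity
    _ = (2 + 16/lam) * (1 + L₀ + 16*Kc/lam) * Real.exp (-(lam/8) * x ^ 2) := by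
        rw [← Real.exp_add]
        have e1 : (1:ℝ)/ε = 16/lam := by rw [hε, one_div_div]
        have e2 : Kc/ε = 16*Kc/lam := by rw [hε, div_div_eq_mul_div]; ring
        have e3 : (lam/8) * x ^ 2 + (-(lam/4) * x ^ 2) = -(lam/8) * x ^ 2 := by ring
        rw [e1, e2, e3]

section Bounds

variable {n m K : ℕ} {S : Matrix (Fin n) (Fin n) ℝ} {H : Matrix (Fin n) (Fin m) ℝ}
  {w : Fin K → ℝ} {pts : Fin K → (Fin m → ℝ)}

lemma phiF_upper (hS : S.PosDef) {lam : ℝ} (hlam : 0 < lam)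
    (hco : ∀ v, lam * ‖v‖ ^ 2 ≤ qF S v) {t R : ℝ} (ht : 0 ≤ t) (hR0 : 0 ≤ R)
    (hR : ∀ k, Real.sqrt t * ‖aV H pts k‖ ≤ R) (k : Fin K) (y : Fin n → ℝ) :
    phiF S H pts k t y
      ≤ gC n S * Real.exp (lam * R ^ 2 / 2) * Real.exp (-(lam/4) * ‖y‖ ^ 2) := by
  rw [phiF_eq hS ht k y]
  rw [mul_assoc, ← Real.exp_add]
  refine mul_le_mul_of_nonneg_left (Real.exp_le_exp.2 ?_) (gC_pos hS).le
  set u := y - Real.sqrt t • aV H pts k with hu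
  have hqu : lam * ‖u‖ ^ 2 ≤ qF S u := hco u
  have hyu : ‖y‖ ≤ ‖u‖ + R := by
    have : y = u + Real.sqrt t • aV H pts k := by rw [hu]; abel
    calc ‖y‖ = ‖u + Real.sqrt t • aV H pts k‖ := by rw [← this]
      _ ≤ ‖u‖ + ‖Real.sqrt t • aV H pts k‖ := norm_add_le _ _
      _ ≤ ‖u‖ + R := by
          refine add_le_add le_rfl ?_
          rw [norm_smul, Real.norm_eq_abs, abs_of_nonneg (Real.sqrt_nonneg _)]
          exact hR k
  have hsq : ‖y‖ ^ 2 ≤ 2 * ‖u‖ ^ 2 + 2 * R ^ 2 := by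
    have h := mul_le_mul hyu hyu (norm_nonneg y) (by positivity)
    nlinarith [sq_nonneg (‖u‖ - R)]
  nlinarith [norm_nonneg u]

lemma phiF_le_gC (hS : S.PosDef) {lam : ℝ} (hlam : 0 < lam)
    (hco : ∀ v, lam * ‖v‖ ^ 2 ≤ qF S v) {t : ℝ} (ht : 0 ≤ t) (k : Fin K) (y : Fin n → ℝ) :
    phiF S H pts k t y ≤ gC n S := by
  rw [phiF_eq hS ht k y]
  have h1 : 0 ≤ qF S (y - Real.sqrt t • aV H pts k) := by
    have := hco (y - Real.sqrt t • aV H pts k)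
    nlinarith [norm_nonneg (y - Real.sqrt t • aV H pts k)]
  calc gC n S * Real.exp (-(qF S (y - Real.sqrt t • aV H pts k)) / 2)
      ≤ gC n S * 1 := by
        refine mul_le_mul_of_nonneg_left ?_ (gC_pos hS).le
        rw [← Real.exp_zero]
        exact Real.exp_le_exp.2 (by linarith)
    _ = gC n S := mul_one _

lemma phiF_lower (hS : S.PosDef) {Kc : ℝ}
    (hqub : ∀ v, qF S v ≤ Kc * ‖v‖ ^ 2) {t R : ℝ} (ht : 0 ≤ t) (hKc : 0 ≤ Kc)
    (hR : ∀ k, Real.sqrt t * ‖aV H pts k‖ ≤ R) (k : Fin K) (y : Fin n → ℝ) :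
    gC n S * Real.exp (-(Kc * (‖y‖ ^ 2 + R ^ 2))) ≤ phiF S H pts k t y := by
  rw [phiF_eq hS ht k y]
  refine mul_le_mul_of_nonneg_left (Real.exp_le_exp.2 ?_) (gC_pos hS).le
  set u := y - Real.sqrt t • aV H pts k with hu
  have hqu : qF S u ≤ Kc * ‖u‖ ^ 2 := hqub u
  have hR0 : 0 ≤ R := le_trans (by positivity) (hR k)
  have huy : ‖u‖ ≤ ‖y‖ + R := by
    calc ‖u‖ ≤ ‖y‖ + ‖Real.sqrt t • aV H pts k‖ := norm_sub_le _ _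
      _ ≤ ‖y‖ + R := by
          refine add_le_add le_rfl ?_
          rw [norm_smul, Real.norm_eq_abs, abs_of_nonneg (Real.sqrt_nonneg _)]
          exact hR k
  have hsq : ‖u‖ ^ 2 ≤ 2 * ‖y‖ ^ 2 + 2 * R ^ 2 := by
    have h := mul_le_mul huy huy (norm_nonneg u) (by positivity)
    nlinarith [sq_nonneg (‖y‖ - R)]
  nlinarith [norm_nonneg y]

lemma fF_upper (hS : S.PosDef) (hw : ∀ k, 0 ≤ w k) (hw1 : ∑ k, w k = 1)
    {lam : ℝ} (hlam : 0 < lam) (hco : ∀ v, lam * ‖v‖ ^ 2 ≤ qF S v)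
    {t R : ℝ} (ht : 0 ≤ t) (hR0 : 0 ≤ R)
    (hR : ∀ k, Real.sqrt t * ‖aV H pts k‖ ≤ R) (y : Fin n → ℝ) :
    fF S H w pts t y
      ≤ gC n S * Real.exp (lam * R ^ 2 / 2) * Real.exp (-(lam/4) * ‖y‖ ^ 2) := by
  unfold fF
  calc ∑ k, w k * phiF S H pts k t y
      ≤ ∑ k, w k * (gC n S * Real.exp (lam * R ^ 2 / 2) * Real.exp (-(lam/4) * ‖y‖ ^ 2)) := by
        refine Finset.sum_le_sum fun k _ => ?_
        exact mul_le_mul_of_nonneg_left (phiF_upper hS hlam hco ht hR0 hR k y) (hw k)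
    _ = gC n S * Real.exp (lam * R ^ 2 / 2) * Real.exp (-(lam/4) * ‖y‖ ^ 2) := by
        rw [← Finset.sum_mul, hw1, one_mul]

lemma fF_le_gC (hS : S.PosDef) (hw : ∀ k, 0 ≤ w k) (hw1 : ∑ k, w k = 1)
    {lam : ℝ} (hlam : 0 < lam) (hco : ∀ v, lam * ‖v‖ ^ 2 ≤ qF S v)
    {t : ℝ} (ht : 0 ≤ t) (y : Fin n → ℝ) :
    fF S H w pts t y ≤ gC n S := by
  unfold fF
  calc ∑ k, w k * phiF S H pts k t y ≤ ∑ k, w k * gC n S := by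
        refine Finset.sum_le_sum fun k _ => ?_
        exact mul_le_mul_of_nonneg_left (phiF_le_gC hS hlam hco ht k y) (hw k)
    _ = gC n S := by rw [← Finset.sum_mul, hw1, one_mul]

lemma fF_lower (hS : S.PosDef) (hw : ∀ k, 0 ≤ w k) {k₀ : Fin K} (hk₀ : 0 < w k₀)
    {Kc : ℝ} (hqub : ∀ v, qF S v ≤ Kc * ‖v‖ ^ 2) {t R : ℝ} (ht : 0 ≤ t) (hKc : 0 ≤ Kc)
    (hR : ∀ k, Real.sqrt t * ‖aV H pts k‖ ≤ R) (y : Fin n → ℝ) :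
    w k₀ * (gC n S * Real.exp (-(Kc * (‖y‖ ^ 2 + R ^ 2)))) ≤ fF S H w pts t y := by
  unfold fF
  calc w k₀ * (gC n S * Real.exp (-(Kc * (‖y‖ ^ 2 + R ^ 2))))
      ≤ w k₀ * phiF S H pts k₀ t y :=
        mul_le_mul_of_nonneg_left (phiF_lower hS hqub ht hKc hR k₀ y) hk₀.le
    _ ≤ ∑ k, w k * phiF S H pts k t y :=
        Finset.single_le_sum (f := fun k => w k * phiF S H pts k t y)
          (fun k _ => mul_nonneg (hw k) (phiF_pos hS k t y).le) (Finset.mem_univ k₀)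

lemma logF_bound (hS : S.PosDef) (hw : ∀ k, 0 ≤ w k) (hw1 : ∑ k, w k = 1)
    {k₀ : Fin K} (hk₀ : 0 < w k₀)
    {lam Kc : ℝ} (hlam : 0 < lam) (hco : ∀ v, lam * ‖v‖ ^ 2 ≤ qF S v)
    (hqub : ∀ v, qF S v ≤ Kc * ‖v‖ ^ 2) {t R : ℝ} (ht : 0 ≤ t) (hKc : 0 ≤ Kc)
    (hR : ∀ k, Real.sqrt t * ‖aV H pts k‖ ≤ R) (y : Fin n → ℝ) :
    |Real.log (fF S H w pts t y)|
      ≤ (|Real.log (gC n S)| + |Real.log (w k₀ * gC n S)| + Kc * R ^ 2) + Kc * ‖y‖ ^ 2 := by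
  have hfpos := fF_pos (H := H) (pts := pts) hS hw hk₀ t y
  rw [abs_le]
  constructor
  · -- lower bound on log f
    have hlow := fF_lower hS hw hk₀ hqub ht hKc hR y
    have hlpos : 0 < w k₀ * (gC n S * Real.exp (-(Kc * (‖y‖ ^ 2 + R ^ 2)))) :=
      mul_pos hk₀ (mul_pos (gC_pos hS) (Real.exp_pos _))
    have h1 : Real.log (w k₀ * (gC n S * Real.exp (-(Kc * (‖y‖ ^ 2 + R ^ 2)))))
        ≤ Real.log (fF S H w pts t y) := Real.log_le_log hlpos hlow
    have h2 : Real.log (w k₀ * (gC n S * Real.exp (-(Kc * (‖y‖ ^ 2 + R ^ 2)))))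
        = Real.log (w k₀ * gC n S) + (-(Kc * (‖y‖ ^ 2 + R ^ 2))) := by
      rw [← mul_assoc, Real.log_mul (mul_pos hk₀ (gC_pos hS)).ne' (Real.exp_pos _).ne', Real.log_exp]
    have h3 : -|Real.log (w k₀ * gC n S)| ≤ Real.log (w k₀ * gC n S) := neg_abs_le _
    nlinarith [abs_nonneg (Real.log (gC n S))]
  · -- upper bound
    have hup := fF_le_gC (H := H) (pts := pts) hS hw hw1 hlam hco ht y
    have h1 : Real.log (fF S H w pts t y) ≤ Real.log (gC n S) := Real.log_le_log hfpos hup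
    have h2 : Real.log (gC n S) ≤ |Real.log (gC n S)| := le_abs_self _
    nlinarith [abs_nonneg (Real.log (w k₀ * gC n S)), norm_nonneg y, sq_nonneg R,
      mul_nonneg hKc (sq_nonneg R), mul_nonneg hKc (sq_nonneg ‖y‖)]

end Bounds

section Bounds2

variable {n m K : ℕ} {S : Matrix (Fin n) (Fin n) ℝ} {H : Matrix (Fin n) (Fin m) ℝ}
  {w : Fin K → ℝ} {pts : Fin K → (Fin m → ℝ)}

lemma psiF_bound {Kc Ra s₀ t : ℝ} (hKc : 0 ≤ Kc) (hRa : 0 ≤ Ra) (hs₀ : 0 < s₀)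
    (hst : s₀ ≤ Real.sqrt t) {k : Fin K} {y : Fin n → ℝ}
    (hbk : |bF S H pts y k| ≤ Kc * Ra * ‖y‖)
    (hqa0 : 0 ≤ qF S (aV H pts k)) (hqa : qF S (aV H pts k) ≤ Kc * Ra ^ 2) :
    |psiF S H pts k t y| ≤ ((Kc * Ra / s₀ + Kc * Ra ^ 2) / 2) * (1 + ‖y‖) := by
  unfold psiF
  have hstpos : 0 < Real.sqrt t := lt_of_lt_of_le hs₀ hst
  have h1 : |bF S H pts y k / Real.sqrt t - qF S (aV H pts k)|
      ≤ |bF S H pts y k| / Real.sqrt t + qF S (aV H pts k) := by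
    calc |bF S H pts y k / Real.sqrt t - qF S (aV H pts k)|
        ≤ |bF S H pts y k / Real.sqrt t| + |qF S (aV H pts k)| := abs_sub _ _
      _ = |bF S H pts y k| / Real.sqrt t + qF S (aV H pts k) := by
          rw [abs_div, abs_of_pos hstpos, abs_of_nonneg hqa0]
  have h2 : |bF S H pts y k| / Real.sqrt t ≤ Kc * Ra * ‖y‖ / s₀ := by
    calc |bF S H pts y k| / Real.sqrt t ≤ |bF S H pts y k| / s₀ := by
          gcongr
      _ ≤ Kc * Ra * ‖y‖ / s₀ := by gcongr
  rw [abs_div]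
  have habs2 : |(2:ℝ)| = 2 := by norm_num
  rw [habs2]
  have hfinal : |bF S H pts y k / Real.sqrt t - qF S (aV H pts k)|
      ≤ Kc * Ra * ‖y‖ / s₀ + Kc * Ra ^ 2 := by linarith
  have hx : (0:ℝ) ≤ ‖y‖ := norm_nonneg _
  have hd : 0 ≤ Kc * Ra / s₀ := by positivity
  have hd2 : 0 ≤ Kc * Ra ^ 2 := by positivity
  have hkey : Kc * Ra * ‖y‖ / s₀ + Kc * Ra ^ 2
      ≤ (Kc * Ra / s₀ + Kc * Ra ^ 2) * (1 + ‖y‖) := by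
    have : Kc * Ra * ‖y‖ / s₀ = (Kc * Ra / s₀) * ‖y‖ := by ring
    nlinarith [mul_nonneg hd2 hx]
  linarith [abs_nonneg (bF S H pts y k / Real.sqrt t - qF S (aV H pts k))]

lemma fF'_bound (hS : S.PosDef) (hw : ∀ k, 0 ≤ w k) (hw1 : ∑ k, w k = 1)
    {lam : ℝ} (hlam : 0 < lam) (hco : ∀ v, lam * ‖v‖ ^ 2 ≤ qF S v)
    {t R D₁ : ℝ} (ht : 0 ≤ t) (hR0 : 0 ≤ R) (hD₁ : 0 ≤ D₁)
    (hR : ∀ k, Real.sqrt t * ‖aV H pts k‖ ≤ R)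
    {y : Fin n → ℝ} (hψ : ∀ k, |psiF S H pts k t y| ≤ D₁ * (1 + ‖y‖)) :
    |fF' S H w pts t y| ≤ gC n S * Real.exp (lam * R ^ 2 / 2)
      * (D₁ * (1 + ‖y‖)) * Real.exp (-(lam/4) * ‖y‖ ^ 2) := by
  unfold fF'
  calc |∑ k, w k * (phiF S H pts k t y * psiF S H pts k t y)|
      ≤ ∑ k, |w k * (phiF S H pts k t y * psiF S H pts k t y)| :=
        Finset.abs_sum_le_sum_abs _ _
    _ ≤ ∑ k, w k * (gC n S * Real.exp (lam * R ^ 2 / 2) * Real.exp (-(lam/4) * ‖y‖ ^ 2)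
          * (D₁ * (1 + ‖y‖))) := by
        refine Finset.sum_le_sum fun k _ => ?_
        rw [abs_mul, abs_of_nonneg (hw k), abs_mul,
          abs_of_pos (phiF_pos hS k t y)]
        refine mul_le_mul_of_nonneg_left ?_ (hw k)
        have hφ := phiF_upper hS hlam hco ht hR0 hR k y
        exact mul_le_mul hφ (hψ k) (abs_nonneg _)
          (mul_nonneg (mul_nonneg (gC_pos hS).le (Real.exp_pos _).le) (Real.exp_pos _).le)
    _ = gC n S * Real.exp (lam * R ^ 2 / 2) * (D₁ * (1 + ‖y‖))
          * Real.exp (-(lam/4) * ‖y‖ ^ 2) := by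
        rw [← Finset.sum_mul, hw1, one_mul]; ring

end Bounds2

set_option maxHeartbeats 2000000 in
lemma mi_diff {n m K : ℕ}
    (S : Matrix (Fin n) (Fin n) ℝ) (hS : S.PosDef)
    (H : Matrix (Fin n) (Fin m) ℝ) (w : Fin K → ℝ) (pts : Fin K → (Fin m → ℝ))
    (hw : ∀ k, 0 ≤ w k) (hw1 : ∑ k, w k = 1) (t₀ : ℝ) (ht₀ : 0 < t₀) :
    DifferentiableAt ℝ (fun t => mutInfo S w pts (Real.sqrt t • H)) t₀ := by
  obtain ⟨k₀, hk₀⟩ : ∃ k, 0 < w k := by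
    by_contra h
    push_neg at h
    have : ∑ k, w k = 0 := Finset.sum_eq_zero fun k _ => le_antisymm (h k) (hw k)
    rw [this] at hw1; norm_num at hw1
  -- coercivity and continuity constants
  obtain ⟨lam, hlam, hco⟩ := coercive hS.inv
  have hco' : ∀ v, lam * ‖v‖ ^ 2 ≤ qF S v := hco
  obtain ⟨Kc, hKc, hqub, hdotb⟩ : ∃ Kc : ℝ, 0 ≤ Kc ∧ (∀ v, qF S v ≤ Kc * ‖v‖ ^ 2) ∧
      (∀ (x z : Fin n → ℝ), |x ⬝ᵥ (S⁻¹).mulVec z| ≤ Kc * ‖x‖ * ‖z‖) :=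
    ⟨∑ i, ∑ j, |S⁻¹ i j|,
      Finset.sum_nonneg fun i _ => Finset.sum_nonneg fun j _ => abs_nonneg _,
      fun v => quad_upper (S⁻¹) v, fun x z => dot_bound (S⁻¹) x z⟩
  obtain ⟨Ra, hRa, hRak⟩ : ∃ Ra : ℝ, 0 ≤ Ra ∧ ∀ k, ‖aV H pts k‖ ≤ Ra :=
    ⟨∑ k, ‖aV H pts k‖, Finset.sum_nonneg fun k _ => norm_nonneg _,
      fun k => Finset.single_le_sum (f := fun k => ‖aV H pts k‖)
        (fun k _ => norm_nonneg _) (Finset.mem_univ k)⟩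
  obtain ⟨R, hRdef⟩ : ∃ x : ℝ, x = Real.sqrt (2 * t₀) * Ra := ⟨_, rfl⟩
  have hR0 : 0 ≤ R := by rw [hRdef]; exact mul_nonneg (Real.sqrt_nonneg _) hRa
  have hRt : ∀ t, t ∈ Set.Icc (t₀/2) (2*t₀) → ∀ k, Real.sqrt t * ‖aV H pts k‖ ≤ R := by
    intro t ht k
    rw [hRdef]
    refine mul_le_mul (Real.sqrt_le_sqrt ht.2) (hRak k) (norm_nonneg _) (Real.sqrt_nonneg _)
  obtain ⟨s₀, hs₀def⟩ : ∃ x : ℝ, x = Real.sqrt (t₀/2) := ⟨_, rfl⟩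
  have hs₀ : 0 < s₀ := by rw [hs₀def]; exact Real.sqrt_pos.2 (by linarith)
  have hst : ∀ t, t ∈ Set.Icc (t₀/2) (2*t₀) → s₀ ≤ Real.sqrt t := fun t ht => by
    rw [hs₀def]; exact Real.sqrt_le_sqrt ht.1
  obtain ⟨D₁, hD₁def⟩ : ∃ x : ℝ, x = (Kc * Ra / s₀ + Kc * Ra ^ 2) / 2 := ⟨_, rfl⟩
  have hD₁ : 0 ≤ D₁ := by rw [hD₁def]; positivity
  obtain ⟨gE, hgEdef⟩ : ∃ x : ℝ, x = gC n S * Real.exp (lam * R ^ 2 / 2) := ⟨_, rfl⟩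
  have hgE : 0 < gE := by rw [hgEdef]; exact mul_pos (gC_pos hS) (Real.exp_pos _)
  obtain ⟨L₀, hL₀def⟩ : ∃ x : ℝ,
      x = |Real.log (gC n S)| + |Real.log (w k₀ * gC n S)| + Kc * R ^ 2 := ⟨_, rfl⟩
  have hL₀ : 0 ≤ L₀ := by rw [hL₀def]; positivity
  obtain ⟨CB, hCBdef⟩ : ∃ x : ℝ,
      x = gE * (D₁ + 1) * ((2 + 16/lam) * (1 + L₀ + 16*Kc/lam)) := ⟨_, rfl⟩
  -- the ψ bound, uniform on the time window
  have hψb : ∀ t, t ∈ Set.Icc (t₀/2) (2*t₀) → ∀ (k) (y : Fin n → ℝ),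
      |psiF S H pts k t y| ≤ D₁ * (1 + ‖y‖) := by
    intro t ht k y
    rw [hD₁def]
    refine psiF_bound hKc hRa hs₀ (hst t ht) ?_ ?_ ?_
    · calc |bF S H pts y k| ≤ Kc * ‖y‖ * ‖aV H pts k‖ := hdotb y (aV H pts k)
        _ ≤ Kc * Ra * ‖y‖ := by
            have := hRak k
            nlinarith [norm_nonneg y, norm_nonneg (aV H pts k), mul_nonneg hKc (norm_nonneg y)]
    · have := hco' (aV H pts k)
      nlinarith [norm_nonneg (aV H pts k)]
    · calc qF S (aV H pts k) ≤ Kc * ‖aV H pts k‖ ^ 2 := hqub _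
        _ ≤ Kc * Ra ^ 2 :=
            mul_le_mul_of_nonneg_left
              (pow_le_pow_left₀ (norm_nonneg _) (hRak k) 2) hKc
  -- master pointwise bounds
  have hmaster : ∀ t, t ∈ Set.Icc (t₀/2) (2*t₀) → ∀ y : Fin n → ℝ,
      |fF' S H w pts t y * (Real.log (fF S H w pts t y) + 1)|
        ≤ CB * Real.exp (-(lam/8) * ‖y‖ ^ 2) := by
    intro t ht y
    have ht0 : (0:ℝ) ≤ t := le_trans (by linarith) ht.1
    have h1 : |fF' S H w pts t y| ≤ gE * (D₁ * (1 + ‖y‖)) * Real.exp (-(lam/4) * ‖y‖ ^ 2) := by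
      have := fF'_bound hS hw hw1 hlam hco' ht0 hR0 hD₁ (hRt t ht) (hψb t ht · y)
      simpa [hgEdef] using this
    have h2 : |Real.log (fF S H w pts t y)| ≤ L₀ + Kc * ‖y‖ ^ 2 := by
      have := logF_bound hS hw hw1 hk₀ hlam hco' hqub ht0 hKc (hRt t ht) y
      simpa [hL₀def] using this
    have h3 : |Real.log (fF S H w pts t y) + 1| ≤ 1 + L₀ + Kc * ‖y‖ ^ 2 := by
      calc |Real.log (fF S H w pts t y) + 1|
          ≤ |Real.log (fF S H w pts t y)| + |(1:ℝ)| := abs_add_le _ _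
        _ ≤ 1 + L₀ + Kc * ‖y‖ ^ 2 := by
            rw [abs_one]; linarith
    rw [abs_mul]
    calc |fF' S H w pts t y| * |Real.log (fF S H w pts t y) + 1|
        ≤ (gE * (D₁ * (1 + ‖y‖)) * Real.exp (-(lam/4) * ‖y‖ ^ 2)) * (1 + L₀ + Kc * ‖y‖ ^ 2) :=
          mul_le_mul h1 h3 (abs_nonneg _)
            (mul_nonneg (mul_nonneg hgE.le
              (mul_nonneg hD₁ (by linarith [norm_nonneg y]))) (Real.exp_pos _).le)
      _ ≤ gE * (D₁ + 1) * ((1 + ‖y‖) * (1 + L₀ + Kc * ‖y‖ ^ 2)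
            * Real.exp (-(lam/4) * ‖y‖ ^ 2)) := by
          have hA : (0:ℝ) ≤ 1 + L₀ + Kc * ‖y‖ ^ 2 := by
            nlinarith [mul_nonneg hKc (sq_nonneg ‖y‖)]
          have hbase : (0:ℝ) ≤ (1 + ‖y‖) * (1 + L₀ + Kc * ‖y‖ ^ 2)
              * Real.exp (-(lam/4) * ‖y‖ ^ 2) :=
            mul_nonneg (mul_nonneg (by linarith [norm_nonneg y]) hA) (Real.exp_pos _).le
          have hcoef : gE * D₁ ≤ gE * (D₁ + 1) :=
            mul_le_mul_of_nonneg_left (by linarith) hgE.le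
          calc gE * (D₁ * (1 + ‖y‖)) * Real.exp (-(lam/4) * ‖y‖ ^ 2)
                * (1 + L₀ + Kc * ‖y‖ ^ 2)
              = (gE * D₁) * ((1 + ‖y‖) * (1 + L₀ + Kc * ‖y‖ ^ 2)
                  * Real.exp (-(lam/4) * ‖y‖ ^ 2)) := by ring
            _ ≤ (gE * (D₁ + 1)) * ((1 + ‖y‖) * (1 + L₀ + Kc * ‖y‖ ^ 2)
                  * Real.exp (-(lam/4) * ‖y‖ ^ 2)) :=
                mul_le_mul_of_nonneg_right hcoef hbase
      _ ≤ gE * (D₁ + 1) * ((2 + 16/lam) * (1 + L₀ + 16*Kc/lam)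
            * Real.exp (-(lam/8) * ‖y‖ ^ 2)) := by
          refine mul_le_mul_of_nonneg_left ?_ (mul_nonneg hgE.le (by linarith))
          have := absorb hlam hL₀ hKc (norm_nonneg y)
          linarith
      _ = CB * Real.exp (-(lam/8) * ‖y‖ ^ 2) := by rw [hCBdef]; ring
  have hmaster0 : ∀ y : Fin n → ℝ,
      |fF S H w pts t₀ y * Real.log (fF S H w pts t₀ y)|
        ≤ CB * Real.exp (-(lam/8) * ‖y‖ ^ 2) := by
    intro y
    have ht : t₀ ∈ Set.Icc (t₀/2) (2*t₀) := ⟨by linarith, by linarith⟩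
    have h1 : |fF S H w pts t₀ y| ≤ gE * Real.exp (-(lam/4) * ‖y‖ ^ 2) := by
      have hub := fF_upper hS hw hw1 hlam hco' (le_of_lt ht₀) hR0 (hRt t₀ ht) y
      have hpos := fF_pos (H := H) (pts := pts) hS hw hk₀ t₀ y
      rw [abs_of_pos hpos]
      simpa [hgEdef] using hub
    have h2 : |Real.log (fF S H w pts t₀ y)| ≤ L₀ + Kc * ‖y‖ ^ 2 := by
      have := logF_bound hS hw hw1 hk₀ hlam hco' hqub (le_of_lt ht₀) hKc (hRt t₀ ht) y
      simpa [hL₀def] using this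
    rw [abs_mul]
    calc |fF S H w pts t₀ y| * |Real.log (fF S H w pts t₀ y)|
        ≤ (gE * Real.exp (-(lam/4) * ‖y‖ ^ 2)) * (L₀ + Kc * ‖y‖ ^ 2) :=
          mul_le_mul h1 h2 (abs_nonneg _) (mul_nonneg hgE.le (Real.exp_pos _).le)
      _ ≤ gE * (D₁ + 1) * ((1 + ‖y‖) * (1 + L₀ + Kc * ‖y‖ ^ 2)
            * Real.exp (-(lam/4) * ‖y‖ ^ 2)) := by
          have hKy : (0:ℝ) ≤ Kc * ‖y‖ ^ 2 := mul_nonneg hKc (sq_nonneg _)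
          have hA : (0:ℝ) ≤ 1 + L₀ + Kc * ‖y‖ ^ 2 := by linarith
          have h5 : L₀ + Kc * ‖y‖ ^ 2 ≤ (1 + ‖y‖) * (1 + L₀ + Kc * ‖y‖ ^ 2) := by
            nlinarith [norm_nonneg y, mul_nonneg (norm_nonneg y) hA]
          have hbase : (0:ℝ) ≤ (1 + ‖y‖) * (1 + L₀ + Kc * ‖y‖ ^ 2)
              * Real.exp (-(lam/4) * ‖y‖ ^ 2) :=
            mul_nonneg (mul_nonneg (by linarith [norm_nonneg y]) hA) (Real.exp_pos _).le
          calc (gE * Real.exp (-(lam/4) * ‖y‖ ^ 2)) * (L₀ + Kc * ‖y‖ ^ 2)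
              = gE * ((L₀ + Kc * ‖y‖ ^ 2) * Real.exp (-(lam/4) * ‖y‖ ^ 2)) := by ring
            _ ≤ gE * ((1 + ‖y‖) * (1 + L₀ + Kc * ‖y‖ ^ 2)
                  * Real.exp (-(lam/4) * ‖y‖ ^ 2)) :=
                mul_le_mul_of_nonneg_left
                  (mul_le_mul_of_nonneg_right h5 (Real.exp_pos _).le) hgE.le
            _ ≤ gE * (D₁ + 1) * ((1 + ‖y‖) * (1 + L₀ + Kc * ‖y‖ ^ 2)
                  * Real.exp (-(lam/4) * ‖y‖ ^ 2)) := by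
                refine mul_le_mul_of_nonneg_right ?_ hbase
                nlinarith
      _ ≤ gE * (D₁ + 1) * ((2 + 16/lam) * (1 + L₀ + 16*Kc/lam)
            * Real.exp (-(lam/8) * ‖y‖ ^ 2)) := by
          refine mul_le_mul_of_nonneg_left ?_ (mul_nonneg hgE.le (by linarith))
          have := absorb hlam hL₀ hKc (norm_nonneg y)
          linarith
      _ = CB * Real.exp (-(lam/8) * ‖y‖ ^ 2) := by rw [hCBdef]; ring
  -- dominated differentiation under the integral
  have hball : ∀ t, t ∈ Metric.ball t₀ (t₀/2) → t ∈ Set.Icc (t₀/2) (2*t₀) ∧ 0 < t := by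
    intro t ht
    rw [Metric.mem_ball, Real.dist_eq, abs_lt] at ht
    constructor
    · constructor <;> linarith
    · linarith
  have bound_int : Integrable (fun y : Fin n → ℝ => CB * Real.exp (-(lam/8) * ‖y‖ ^ 2)) :=
    (integrable_exp_neg_sup_sq (by positivity : (0:ℝ) < lam/8)).const_mul CB
  have key := hasDerivAt_integral_of_dominated_loc_of_deriv_le
    (F := fun t (y : Fin n → ℝ) => fF S H w pts t y * Real.log (fF S H w pts t y))
    (F' := fun t (y : Fin n → ℝ) => fF' S H w pts t y * (Real.log (fF S H w pts t y) + 1))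
    (bound := fun y : Fin n → ℝ => CB * Real.exp (-(lam/8) * ‖y‖ ^ 2))
    (x₀ := t₀) (s := Metric.ball t₀ (t₀/2)) (Metric.ball_mem_nhds _ (by positivity))
    (Filter.Eventually.of_forall fun t =>
      (FlogF_continuous hS hw hk₀ t).aestronglyMeasurable)
    (bound_int.mono' (FlogF_continuous hS hw hk₀ t₀).aestronglyMeasurable
      (Filter.Eventually.of_forall fun y => by
        rw [Real.norm_eq_abs]; exact hmaster0 y))
    ((F'full_continuous hS hw hk₀ t₀).aestronglyMeasurable)
    (Filter.Eventually.of_forall fun y t ht => by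
      rw [Real.norm_eq_abs]
      exact hmaster t (hball t ht).1 y)
    bound_int
    (Filter.Eventually.of_forall fun y t ht =>
      FlogF_hasDerivAt hS hw hk₀ (hball t ht).2 y)
  -- conclude
  have hIdiff : DifferentiableAt ℝ
      (fun t => (-∫ y, fF S H w pts t y * Real.log (fF S H w pts t y)) -
        (-∫ y, gaussPdf S y * Real.log (gaussPdf S y))) t₀ := by
    have hd := key.2.differentiableAt
    exact (hd.neg).sub_const _
  refine hIdiff.congr_of_eventuallyEq ?_
  have hmem : Set.Ioi (0:ℝ) ∈ nhds t₀ := Ioi_mem_nhds ht₀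
  refine Filter.eventuallyEq_of_mem hmem fun t ht => ?_
  have ht' : (0:ℝ) ≤ t := le_of_lt ht
  unfold mutInfo
  have hfun : (fun y : Fin n → ℝ => mixDensity S w pts (Real.sqrt t • H) y *
      Real.log (mixDensity S w pts (Real.sqrt t • H) y))
      = fun y => fF S H w pts t y * Real.log (fF S H w pts t y) :=
    funext fun y => by rw [mix_eq hS ht' y]
  rw [hfun]

lemma d2_eq (β lam1 lam2 : ℝ) : d2 β lam1 lam2 =
    (2*Real.sqrt lam1 - 2*β*Real.sqrt lam2)^2 + (2*β*Real.sqrt lam1 - 2*Real.sqrt lam2)^2 := by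
  simp [d2, Matrix.mulVec, dotProduct, Fin.sum_univ_two, Matrix.mul_apply,
    Matrix.diagonal, Matrix.cons_val_zero, Matrix.cons_val_one, Matrix.head_cons]
  ring

/-- Let `y = Hs + z` with `z ∼ N(0, Σz)`, `Σz ≻ 0`, independent of `s`, and `s` with
finite support.  Then `I(s; y)` is differentiable along `snr ↦ √snr·H`, and in the
two-dimensional counterexample the squared received-point distances satisfy
`d²(ρ,0,β) = d²(0,ρ,β) = 4ρ(1+β²)`, `d²(ρ/2,ρ/2,β) = 4ρ(1−β)²`; in particular for
`0 < β ≤ 1`, `d²(ρ,0,β) > 4ρ > d²(ρ/2,ρ/2,β)`. -/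
theorem mi_differentiable_and_counterexample_distances {n m K : ℕ}
    (S : Matrix (Fin n) (Fin n) ℝ) (hS : S.PosDef)
    (H : Matrix (Fin n) (Fin m) ℝ) (w : Fin K → ℝ) (pts : Fin K → (Fin m → ℝ))
    (hw : ∀ k, 0 ≤ w k) (hw1 : ∑ k, w k = 1) :
    (∀ snr : ℝ, 0 < snr →
      DifferentiableAt ℝ (fun t => mutInfo S w pts (Real.sqrt t • H)) snr) ∧
    (∀ β ρ : ℝ, 0 < ρ →
      d2 β ρ 0 = 4 * ρ * (1 + β ^ 2) ∧
      d2 β 0 ρ = 4 * ρ * (1 + β ^ 2) ∧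
      d2 β (ρ / 2) (ρ / 2) = 4 * ρ * (1 - β) ^ 2 ∧
      (0 < β → β ≤ 1 → 4 * ρ < d2 β ρ 0 ∧ d2 β (ρ / 2) (ρ / 2) < 4 * ρ)) := by
  constructor
  · exact fun snr hsnr => mi_diff S hS H w pts hw hw1 snr hsnr
  · intro β ρ hρ
    have h : Real.sqrt ρ ^ 2 = ρ := Real.sq_sqrt hρ.le
    have h2 : Real.sqrt (ρ/2) ^ 2 = ρ/2 := Real.sq_sqrt (by linarith)
    have e1 : d2 β ρ 0 = 4 * ρ * (1 + β ^ 2) := by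
      rw [d2_eq, Real.sqrt_zero]
      linear_combination (4 + 4*β^2) * h
    have e2 : d2 β 0 ρ = 4 * ρ * (1 + β ^ 2) := by
      rw [d2_eq, Real.sqrt_zero]
      linear_combination (4*β^2 + 4) * h
    have e3 : d2 β (ρ/2) (ρ/2) = 4 * ρ * (1 - β) ^ 2 := by
      rw [d2_eq]
      linear_combination ((2 - 2*β)^2 + (2*β - 2)^2) * h2
    refine ⟨e1, e2, e3, fun hβ hβ1 => ⟨?_, ?_⟩⟩
    · rw [e1]
      nlinarith [mul_pos hρ (mul_pos hβ hβ)]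
    · rw [e3]
      nlinarith [mul_pos (mul_pos hρ hβ) (show (0:ℝ) < 2 - β by linarith)]
end
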